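/- (Case 2 of the main theorem.) Fix q ∈ (0,1), let C_q be any positive constant with C_q < 2q(1−q), set R = 0.001987, T₀ = 310, and C_n* = R·T₀·ln 9 / (0.3·C_q·n). Consider random structures A, B of length n whose 2n pairedness indicators are independent Bernoulli(q). Then for every ε > 0 there exists N such that for all n ≥ N and all C with C ≥ C_n*, the probability that R·T₀·ln 9 / (C·bp(AΔB)) ≤ 0.3 (i.e., that the upper bound on the crossover window length from the crossover window lemma is at most 0.3) is at least 1 − ε. -/

import Mathlib

-- An RNA structure of length `n` is `A : Fin n → Bool`; `A i = true` means `i` is paired.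
/-- `bp A` = number of paired nucleotides of `A`. -/
def bp {n : ℕ} (A : Fin n → Bool) : ℕ :=
  (Finset.univ.filter fun i => A i = true).card

/-- `bpd A B` = number of positions paired in `A` but not in `B`. -/
def bpd {n : ℕ} (A B : Fin n → Bool) : ℕ :=
  (Finset.univ.filter fun i => A i = true ∧ B i = false).card

/-- `bps A B` = bp(A Δ B) = bp(A−B) + bp(B−A). -/
def bps {n : ℕ} (A B : Fin n → Bool) : ℕ := bpd A B + bpd B A

/-- The noiseless data sequence of a structure: 0 at paired positions, 1 at unpaired. -/
def dat {n : ℕ} (A : Fin n → Bool) : Fin n → ℝ := fun i => if A i then 0 else 1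

/-- Mixed data `M(p)` for structures `A`, `B`. -/
def mixd {n : ℕ} (A B : Fin n → Bool) (p : ℝ) : Fin n → ℝ :=
  fun i => p * dat A i + (1 - p) * dat B i

/-- Nussinov–Jacobson energy of structure `A` with parameter `C` and data `M`. -/
noncomputable def njE {n : ℕ} (C : ℝ) (A : Fin n → Bool) (M : Fin n → ℝ) : ℝ :=
  -(bp A : ℝ) + C * ∑ i, |(if A i then (0 : ℝ) else 1) - M i|

/-- Weight of a pair of structures under the product Bernoulli(q) model: each of the `2n`
pairedness indicators is independently `true` with probability `q`. -/
noncomputable def pairWeight (q : ℝ) (n : ℕ) (AB : (Fin n → Bool) × (Fin n → Bool)) : ℝ :=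
  (∏ i, if AB.1 i then q else 1 - q) * (∏ i, if AB.2 i then q else 1 - q)

open Classical in
/-- Probability of an event `P` on pairs of random structures of length `n` under the
product Bernoulli(q) model. -/
noncomputable def pairProb (q : ℝ) (n : ℕ)
    (P : (Fin n → Bool) × (Fin n → Bool) → Prop) : ℝ :=
  ∑ AB : (Fin n → Bool) × (Fin n → Bool), if P AB then pairWeight q n AB else 0


/-- Weight of a single position: a pair of independent Bernoulli(q) indicators. -/
noncomputable def wt2 (q : ℝ) (x : Bool × Bool) : ℝ :=
  (if x.1 then q else 1 - q) * (if x.2 then q else 1 - q)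

/-- Disagreement indicator at a single position. -/
def dd2 (x : Bool × Bool) : ℝ := if x.1 ≠ x.2 then 1 else 0

lemma dd2_sq (x : Bool × Bool) : dd2 x * dd2 x = dd2 x := by
  unfold dd2; split <;> norm_num

lemma wt2_nonneg {q : ℝ} (hq0 : 0 < q) (hq1 : q < 1) (x : Bool × Bool) : 0 ≤ wt2 q x := by
  unfold wt2
  have h1 : (0:ℝ) ≤ q := le_of_lt hq0
  have h2 : (0:ℝ) ≤ 1 - q := by linarith
  split <;> split <;> positivity

lemma sum_wt2 (q : ℝ) : ∑ x : Bool × Bool, wt2 q x = 1 := by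
  rw [Fintype.sum_prod_type]
  simp [wt2]
  ring

lemma sum_wt2_dd2 (q : ℝ) : ∑ x : Bool × Bool, wt2 q x * dd2 x = 2 * q * (1 - q) := by
  rw [Fintype.sum_prod_type]
  simp [wt2, dd2]
  ring

lemma mass_one (q : ℝ) (n : ℕ) :
    ∑ g : Fin n → Bool × Bool, ∏ i, wt2 q (g i) = 1 := by
  rw [← Fintype.prod_sum]
  simp [sum_wt2]

lemma moment_one (q : ℝ) (n : ℕ) (i : Fin n) :
    ∑ g : Fin n → Bool × Bool, (∏ j, wt2 q (g j)) * dd2 (g i)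
      = 2 * q * (1 - q) := by
  have h : ∀ g : Fin n → Bool × Bool,
      (∏ j, wt2 q (g j)) * dd2 (g i)
        = ∏ j, (wt2 q (g j) * (if j = i then dd2 (g j) else 1)) := by
    intro g
    rw [Finset.prod_mul_distrib, Finset.prod_ite_eq' Finset.univ i (fun j => dd2 (g j))]
    simp
  simp_rw [h]
  rw [← Fintype.prod_sum (fun (j : Fin n) (x : Bool × Bool) => wt2 q x * (if j = i then dd2 x else 1))]
  have h2 : ∀ j : Fin n, (∑ x : Bool × Bool, wt2 q x * (if j = i then dd2 x else 1))
      = if j = i then 2 * q * (1 - q) else 1 := by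
    intro j
    by_cases hji : j = i <;> simp [hji, sum_wt2_dd2, sum_wt2]
  simp_rw [h2]
  rw [Finset.prod_ite_eq' Finset.univ i (fun _ => 2 * q * (1 - q))]
  simp

lemma moment_two (q : ℝ) (n : ℕ) (i j : Fin n) (hij : i ≠ j) :
    ∑ g : Fin n → Bool × Bool, (∏ k, wt2 q (g k)) * (dd2 (g i) * dd2 (g j))
      = (2 * q * (1 - q)) * (2 * q * (1 - q)) := by
  have h : ∀ g : Fin n → Bool × Bool,
      (∏ k, wt2 q (g k)) * (dd2 (g i) * dd2 (g j))
        = ∏ k, (wt2 q (g k) * ((if k = i then dd2 (g k) else 1)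
            * (if k = j then dd2 (g k) else 1))) := by
    intro g
    rw [Finset.prod_mul_distrib, Finset.prod_mul_distrib,
      Finset.prod_ite_eq' Finset.univ i (fun k => dd2 (g k)),
      Finset.prod_ite_eq' Finset.univ j (fun k => dd2 (g k))]
    simp
  simp_rw [h]
  rw [← Fintype.prod_sum (fun (k : Fin n) (x : Bool × Bool) => wt2 q x * ((if k = i then dd2 x else 1) * (if k = j then dd2 x else 1)))]
  have h2 : ∀ k : Fin n, (∑ x : Bool × Bool, wt2 q x * ((if k = i then dd2 x else 1)
      * (if k = j then dd2 x else 1)))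
      = (if k = i then 2 * q * (1 - q) else 1) * (if k = j then 2 * q * (1 - q) else 1) := by
    intro k
    by_cases hki : k = i
    · subst hki
      simp [hij, sum_wt2_dd2]
    · by_cases hkj : k = j
      · subst hkj
        simp [Ne.symm hij, hki, sum_wt2_dd2]
      · simp [hki, hkj, sum_wt2]
  simp_rw [h2]
  rw [Finset.prod_mul_distrib,
    Finset.prod_ite_eq' Finset.univ i (fun _ => 2 * q * (1 - q)),
    Finset.prod_ite_eq' Finset.univ j (fun _ => 2 * q * (1 - q))]
  simp


lemma mean_S (q : ℝ) (n : ℕ) :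
    ∑ g : Fin n → Bool × Bool, (∏ j, wt2 q (g j)) * (∑ i, dd2 (g i))
      = (n : ℝ) * (2 * q * (1 - q)) := by
  simp_rw [Finset.mul_sum]
  rw [Finset.sum_comm]
  simp_rw [moment_one q n]
  simp [mul_comm]

lemma sq_moment (q : ℝ) (n : ℕ) :
    ∑ g : Fin n → Bool × Bool,
        (∏ k, wt2 q (g k)) * ((∑ i, dd2 (g i)) * (∑ j, dd2 (g j)))
      = (n : ℝ) * (2 * q * (1 - q)) + ((n : ℝ) ^ 2 - n) * (2 * q * (1 - q)) ^ 2 := by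
  have h : ∀ g : Fin n → Bool × Bool,
      (∏ k, wt2 q (g k)) * ((∑ i, dd2 (g i)) * (∑ j, dd2 (g j)))
        = ∑ i, ∑ j, (∏ k, wt2 q (g k)) * (dd2 (g i) * dd2 (g j)) := by
    intro g
    rw [Finset.sum_mul_sum, Finset.mul_sum]
    simp_rw [Finset.mul_sum]
  simp_rw [h]
  rw [Finset.sum_comm]
  have h2 : ∀ i : Fin n,
      ∑ g : Fin n → Bool × Bool, ∑ j, (∏ k, wt2 q (g k)) * (dd2 (g i) * dd2 (g j))
        = ∑ j, ∑ g : Fin n → Bool × Bool, (∏ k, wt2 q (g k)) * (dd2 (g i) * dd2 (g j)) :=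
    fun i => Finset.sum_comm
  simp_rw [h2]
  have h3 : ∀ i j : Fin n,
      ∑ g : Fin n → Bool × Bool, (∏ k, wt2 q (g k)) * (dd2 (g i) * dd2 (g j))
        = if i = j then 2 * q * (1 - q)
          else (2 * q * (1 - q)) * (2 * q * (1 - q)) := by
    intro i j
    by_cases hij : i = j
    · subst hij
      simp_rw [dd2_sq]
      rw [moment_one q n i]
      simp
    · rw [moment_two q n i j hij]
      simp [hij]
  simp_rw [h3]
  have h4 : ∀ i : Fin n,
      (∑ j : Fin n, if i = j then 2 * q * (1 - q)
          else (2 * q * (1 - q)) * (2 * q * (1 - q)))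
        = (n : ℝ) * ((2 * q * (1 - q)) * (2 * q * (1 - q)))
            + (2 * q * (1 - q) - (2 * q * (1 - q)) * (2 * q * (1 - q))) := by
    intro i
    have h5 : ∀ j : Fin n, (if i = j then 2 * q * (1 - q)
          else (2 * q * (1 - q)) * (2 * q * (1 - q)))
        = (2 * q * (1 - q)) * (2 * q * (1 - q))
            + (if i = j then 2 * q * (1 - q) - (2 * q * (1 - q)) * (2 * q * (1 - q)) else 0) := by
      intro j; split <;> ring
    simp_rw [h5]
    rw [Finset.sum_add_distrib, Finset.sum_ite_eq]
    simp [mul_comm]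
  simp_rw [h4]
  rw [Finset.sum_const, Finset.card_univ, Fintype.card_fin, nsmul_eq_mul]
  ring

lemma var_S (q : ℝ) (n : ℕ) :
    ∑ g : Fin n → Bool × Bool,
        (∏ k, wt2 q (g k)) * ((∑ i, dd2 (g i)) - (2 * q * (1 - q)) * n) ^ 2
      = (n : ℝ) * (2 * q * (1 - q)) * (1 - 2 * q * (1 - q)) := by
  have h : ∀ g : Fin n → Bool × Bool,
      (∏ k, wt2 q (g k)) * ((∑ i, dd2 (g i)) - (2 * q * (1 - q)) * n) ^ 2
        = (∏ k, wt2 q (g k)) * ((∑ i, dd2 (g i)) * (∑ j, dd2 (g j)))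
          - (2 * ((2 * q * (1 - q)) * n)) * ((∏ k, wt2 q (g k)) * (∑ i, dd2 (g i)))
          + ((2 * q * (1 - q)) * n) ^ 2 * (∏ k, wt2 q (g k)) := by
    intro g; ring
  simp_rw [h]
  rw [Finset.sum_add_distrib, Finset.sum_sub_distrib, ← Finset.mul_sum, ← Finset.mul_sum,
    mean_S, sq_moment, mass_one]
  ring

lemma bps_cast {n : ℕ} (A B : Fin n → Bool) :
    (bps A B : ℝ) = ∑ i, dd2 (A i, B i) := by
  unfold bps bpd
  rw [Finset.card_filter, Finset.card_filter]
  push_cast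
  rw [← Finset.sum_add_distrib]
  apply Finset.sum_congr rfl
  intro i _
  cases hA : A i <;> cases hB : B i <;> simp [dd2, hA, hB]

open Classical in
lemma pairProb_eq (q : ℝ) (n : ℕ) (P : (Fin n → Bool) × (Fin n → Bool) → Prop) :
    pairProb q n P = ∑ g : Fin n → Bool × Bool,
      if P (fun i => (g i).1, fun i => (g i).2) then ∏ i, wt2 q (g i) else 0 := by
  rw [pairProb, ← Equiv.sum_comp (Equiv.arrowProdEquivProdArrow (Fin n) (fun _ => Bool) (fun _ => Bool))]
  apply Finset.sum_congr rfl
  intro g _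
  have he : (Equiv.arrowProdEquivProdArrow (Fin n) (fun _ => Bool) (fun _ => Bool)) g
      = (fun i => (g i).1, fun i => (g i).2) := rfl
  rw [he]
  split
  · rw [pairWeight, ← Finset.prod_mul_distrib]
    rfl
  · rfl

/-- Case 2 of the main theorem: fix `q ∈ (0,1)`, `0 < C_q < 2q(1−q)`, and set
`C_n* = R·T₀·ln 9/(0.3·C_q·n)` with `R = 0.001987`, `T₀ = 310`.  For every `ε > 0` there is
`N` such that for all `n ≥ N` and all `C ≥ C_n*`, with probability at least `1 − ε` a
random pair of structures satisfies `R·T₀·ln 9/(C·bp(AΔB)) ≤ 0.3`, i.e.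
`bp(AΔB) ≥ R·T₀·ln 9/(0.3·C)`. -/
theorem nj_case_two_short_window (q Cq : ℝ) (hq : q ∈ Set.Ioo (0 : ℝ) 1)
    (hCq : 0 < Cq) (hCq' : Cq < 2 * q * (1 - q)) (ε : ℝ) (hε : 0 < ε) :
    ∃ N : ℕ, ∀ n : ℕ, N ≤ n → ∀ C : ℝ,
      0.001987 * 310 * Real.log 9 / (0.3 * Cq * (n : ℝ)) ≤ C →
      1 - ε ≤ pairProb q n (fun AB =>
        0.001987 * 310 * Real.log 9 / (0.3 * C) ≤ (bps AB.1 AB.2 : ℝ)) := by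
  obtain ⟨hq0, hq1⟩ := hq
  set p : ℝ := 2 * q * (1 - q) with hpdef
  have hp : 0 < p := by
    have : 0 < 1 - q := by linarith
    positivity
  have hpCq : 0 < p - Cq := by simp only [hpdef]; linarith
  have hlog : (0:ℝ) < Real.log 9 := Real.log_pos (by norm_num)
  have hK : (0:ℝ) < 0.001987 * 310 * Real.log 9 := by positivity
  refine ⟨max 1 (Nat.ceil (p / ((p - Cq) ^ 2 * ε))), ?_⟩
  intro n hn C hC
  have hn1 : 1 ≤ n := le_trans (le_max_left _ _) hn
  have hn0 : (0:ℝ) < (n : ℝ) := by exact_mod_cast hn1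
  have hnR : p / ((p - Cq) ^ 2 * ε) ≤ (n : ℝ) := by
    refine le_trans (Nat.le_ceil _) ?_
    exact_mod_cast le_trans (le_max_right 1 _) hn
  have hnR' : p ≤ (n : ℝ) * ((p - Cq) ^ 2 * ε) := by
    rw [div_le_iff₀ (by positivity)] at hnR
    linarith
  have hC0 : (0:ℝ) < C := lt_of_lt_of_le (by positivity) hC
  have ht : 0.001987 * 310 * Real.log 9 / (0.3 * C) ≤ Cq * n := by
    rw [div_le_iff₀ (by positivity)]
    rw [div_le_iff₀ (by positivity)] at hC
    nlinarith
  rw [pairProb_eq]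
  set D : ℝ := ((p - Cq) * n) ^ 2 with hDdef
  have hD : 0 < D := by positivity
  have hpoint : ∀ g : Fin n → Bool × Bool,
      (∏ i, wt2 q (g i)) - (∏ i, wt2 q (g i)) * ((∑ i, dd2 (g i)) - p * n) ^ 2 / D
        ≤ (if 0.001987 * 310 * Real.log 9 / (0.3 * C)
            ≤ ((bps (fun i => (g i).1) (fun i => (g i).2) : ℕ) : ℝ)
           then ∏ i, wt2 q (g i) else 0) := by
    intro g
    have hWnn : 0 ≤ ∏ i, wt2 q (g i) :=
      Finset.prod_nonneg fun i _ => wt2_nonneg hq0 hq1 (g i)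
    have hScast : ((bps (fun i => (g i).1) (fun i => (g i).2) : ℕ) : ℝ)
        = ∑ i, dd2 (g i) := by
      rw [bps_cast]
    by_cases hE : 0.001987 * 310 * Real.log 9 / (0.3 * C)
        ≤ ((bps (fun i => (g i).1) (fun i => (g i).2) : ℕ) : ℝ)
    · rw [if_pos hE]
      have : 0 ≤ (∏ i, wt2 q (g i)) * ((∑ i, dd2 (g i)) - p * n) ^ 2 / D := by positivity
      linarith
    · rw [if_neg hE]
      have hS : (∑ i, dd2 (g i)) < Cq * n := by
        rw [← hScast]
        exact lt_of_lt_of_le (not_le.mp hE) ht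
      have hsq : D ≤ ((∑ i, dd2 (g i)) - p * n) ^ 2 := by
        have hSnn : 0 ≤ ∑ i, dd2 (g i) :=
          Finset.sum_nonneg fun i _ => by unfold dd2; split <;> norm_num
        have hb : (0:ℝ) < (p - Cq) * n := mul_pos hpCq hn0
        have ha : (p - Cq) * (n : ℝ) ≤ p * n - ∑ i, dd2 (g i) := by nlinarith
        rw [hDdef, show ((∑ i, dd2 (g i)) - p * n) ^ 2
          = (p * n - ∑ i, dd2 (g i)) ^ 2 by ring]
        exact pow_le_pow_left₀ hb.le ha 2
      have h2 : (∏ i, wt2 q (g i)) * D ≤ (∏ i, wt2 q (g i)) * ((∑ i, dd2 (g i)) - p * n) ^ 2 :=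
        mul_le_mul_of_nonneg_left hsq hWnn
      have h3 : (∏ i, wt2 q (g i)) ≤ (∏ i, wt2 q (g i)) * ((∑ i, dd2 (g i)) - p * n) ^ 2 / D := by
        rw [le_div_iff₀ hD]
        exact h2
      linarith
  refine le_trans ?_ (Finset.sum_le_sum fun g _ => hpoint g)
  have hsum : ∑ g : Fin n → Bool × Bool,
      ((∏ i, wt2 q (g i)) - (∏ i, wt2 q (g i)) * ((∑ i, dd2 (g i)) - p * n) ^ 2 / D)
      = 1 - ((n : ℝ) * p * (1 - p)) / D := by
    rw [Finset.sum_sub_distrib, mass_one]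
    congr 1
    rw [← Finset.sum_div]
    congr 1
    exact var_S q n
  rw [hsum]
  have hvar : (n : ℝ) * p * (1 - p) / D ≤ ε := by
    rw [div_le_iff₀ hD, hDdef]
    nlinarith [mul_nonneg (mul_nonneg hn0.le hp.le) hp.le,
      mul_le_mul_of_nonneg_left hnR' hn0.le]
  linarith
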